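/- Let F : ℝⁿ → ℝ (Euclidean space with its inner product) be convex and let μ > 0. Suppose for each u ∈ ℝⁿ the infimum defining the Moreau envelope F_μ(u) := ⨅_{z ∈ ℝⁿ} ( F(z) + ‖z − u‖²/(2μ) ) is attained at a unique point prox(u). Then F_μ is convex, F_μ is differentiable at every u with gradient ∇F_μ(u) = (u − prox(u))/μ, and the gradient map u ↦ ∇F_μ(u) is Lipschitz with constant 1/μ. -/
import Mathlib


open scoped RealInnerProductSpace

set_option maxHeartbeats 1000000 in
/-- **Smoothness of the Moreau envelope.** If `F : ℝⁿ → ℝ` is convex, `μ > 0`, and the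
infimum defining the Moreau envelope `F_μ(u) = ⨅_z (F z + ‖z - u‖²/(2μ))` is attained at
a unique point `prox u` for every `u`, then `F_μ` is convex, differentiable everywhere
with gradient `∇F_μ(u) = (u − prox u)/μ`, and this gradient map is `(1/μ)`-Lipschitz. -/
theorem moreau_envelope_smooth
    {n : ℕ} (F : EuclideanSpace ℝ (Fin n) → ℝ) (hF : ConvexOn ℝ Set.univ F)
    (μ : ℝ) (hμ : 0 < μ)
    (prox : EuclideanSpace ℝ (Fin n) → EuclideanSpace ℝ (Fin n))
    (hmin : ∀ u z, F (prox u) + ‖prox u - u‖ ^ 2 / (2 * μ) ≤ F z + ‖z - u‖ ^ 2 / (2 * μ))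
    (huniq : ∀ u z, (∀ w, F z + ‖z - u‖ ^ 2 / (2 * μ) ≤ F w + ‖w - u‖ ^ 2 / (2 * μ)) →
      z = prox u) :
    ConvexOn ℝ Set.univ (fun u => ⨅ z, (F z + ‖z - u‖ ^ 2 / (2 * μ))) ∧
    (∀ u, HasGradientAt (fun u => ⨅ z, (F z + ‖z - u‖ ^ 2 / (2 * μ)))
      (μ⁻¹ • (u - prox u)) u) ∧
    (∀ u v, ‖μ⁻¹ • (u - prox u) - μ⁻¹ • (v - prox v)‖ ≤ (1 / μ) * ‖u - v‖) := by
  have h2μ : (0:ℝ) < 2 * μ := by linarith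
  set M : EuclideanSpace ℝ (Fin n) → ℝ :=
    fun u => ⨅ z, (F z + ‖z - u‖ ^ 2 / (2 * μ)) with hMdef
  -- value of the envelope
  have henv : ∀ u, M u = F (prox u) + ‖prox u - u‖ ^ 2 / (2 * μ) := by
    intro u
    exact le_antisymm (ciInf_le ⟨_, Set.forall_mem_range.2 (hmin u)⟩ (prox u))
      (le_ciInf (hmin u))
  have hMle : ∀ u z, M u ≤ F z + ‖z - u‖ ^ 2 / (2 * μ) := by
    intro u z; rw [henv u]; exact hmin u z
  -- subgradient inequality (multiplied by μ)
  have hsub : ∀ u z, F (prox u) * μ ≤ F z * μ + ⟪prox u - u, z - prox u⟫ := by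
    intro u z
    set p := prox u with hp
    have key : ∀ t : ℝ, 0 < t → t ≤ 1 →
        F p * μ ≤ F z * μ + ⟪p - u, z - p⟫ + t * (‖z - p‖ ^ 2 / 2) := by
      intro t ht ht1
      have hc : F ((1 - t) • p + t • z) ≤ (1 - t) * F p + t * F z :=
        hF.2 (Set.mem_univ p) (Set.mem_univ z) (by linarith) ht.le (by ring)
      have hm := hmin u ((1 - t) • p + t • z)
      rw [← hp] at hm
      have hexp : ‖(1 - t) • p + t • z - u‖ ^ 2
          = ‖p - u‖ ^ 2 + 2 * t * ⟪p - u, z - p⟫ + t ^ 2 * ‖z - p‖ ^ 2 := by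
        have h1 : (1 - t) • p + t • z - u = (p - u) + t • (z - p) := by module
        rw [h1, norm_add_sq_real, real_inner_smul_right, norm_smul,
          Real.norm_eq_abs, abs_of_pos ht, mul_pow]
        ring
      rw [hexp] at hm
      have hm2 : F p * (2 * μ) + ‖p - u‖ ^ 2 ≤
          F ((1 - t) • p + t • z) * (2 * μ) +
            (‖p - u‖ ^ 2 + 2 * t * ⟪p - u, z - p⟫ + t ^ 2 * ‖z - p‖ ^ 2) := by
        have h := mul_le_mul_of_nonneg_right hm h2μ.le
        calc F p * (2 * μ) + ‖p - u‖ ^ 2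
            = (F p + ‖p - u‖ ^ 2 / (2 * μ)) * (2 * μ) := by field_simp
          _ ≤ (F ((1 - t) • p + t • z) +
                (‖p - u‖ ^ 2 + 2 * t * ⟪p - u, z - p⟫ + t ^ 2 * ‖z - p‖ ^ 2) / (2 * μ))
                * (2 * μ) := h
          _ = _ := by field_simp
      nlinarith [mul_le_mul_of_nonneg_right hc h2μ.le, hm2, ht, sq_nonneg t]
    refine le_of_forall_pos_le_add fun ε hε => ?_
    set B : ℝ := ‖z - p‖ ^ 2 / 2 with hB
    have hB0 : 0 ≤ B := by positivity
    set t : ℝ := min 1 (ε / (B + 1)) with htdef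
    have ht0 : 0 < t := lt_min one_pos (by positivity)
    have ht1 : t ≤ 1 := min_le_left _ _
    have htB : t * B ≤ ε := by
      have h1 : t ≤ ε / (B + 1) := min_le_right _ _
      have h2 : t * B ≤ (ε / (B + 1)) * B :=
        mul_le_mul_of_nonneg_right h1 hB0
      have h3 : (ε / (B + 1)) * B ≤ ε := by
        rw [div_mul_eq_mul_div, div_le_iff₀ (by positivity)]
        nlinarith
      linarith
    have := key t ht0 ht1
    linarith
  -- firm nonexpansiveness
  have hfirm : ∀ u v, ‖prox u - prox v‖ ^ 2 ≤ ⟪u - v, prox u - prox v⟫ := by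
    intro u v
    have h1 := hsub u (prox v)
    have h2 := hsub v (prox u)
    have hinner : ⟪prox u - u, prox v - prox u⟫ + ⟪prox v - v, prox u - prox v⟫
        = ⟪u - v, prox u - prox v⟫ - ‖prox u - prox v‖ ^ 2 := by
      rw [← real_inner_self_eq_norm_sq]
      simp only [inner_sub_left, inner_sub_right]
      linarith [real_inner_comm (prox u) (prox v), real_inner_comm u (prox v),
        real_inner_comm v (prox u), real_inner_comm u v]
    linarith
  -- nonexpansive bound on (u - v) - (prox u - prox v)
  have hne : ∀ u v, ‖(u - v) - (prox u - prox v)‖ ≤ ‖u - v‖ := by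
    intro u v
    have hsq : ‖(u - v) - (prox u - prox v)‖ ^ 2 ≤ ‖u - v‖ ^ 2 := by
      rw [norm_sub_sq_real]
      have := hfirm u v
      nlinarith [sq_nonneg ‖prox u - prox v‖]
    nlinarith [norm_nonneg ((u - v) - (prox u - prox v)), norm_nonneg (u - v)]
  -- Lipschitz part
  have hlip : ∀ u v, ‖μ⁻¹ • (u - prox u) - μ⁻¹ • (v - prox v)‖ ≤ (1 / μ) * ‖u - v‖ := by
    intro u v
    have hw : μ⁻¹ • (u - prox u) - μ⁻¹ • (v - prox v)
        = μ⁻¹ • ((u - v) - (prox u - prox v)) := by module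
    rw [hw, norm_smul, Real.norm_eq_abs, abs_of_pos (inv_pos.2 hμ), one_div]
    exact mul_le_mul_of_nonneg_left (hne u v) (inv_pos.2 hμ).le
  -- descent inequality
  have hdesc : ∀ u v, M v ≤ M u + ⟪u - prox u, v - u⟫ / μ + ‖v - u‖ ^ 2 / (2 * μ) := by
    intro u v
    have h1 : M v ≤ F (prox u) + ‖prox u - v‖ ^ 2 / (2 * μ) := hMle v (prox u)
    have hexp : ‖prox u - v‖ ^ 2
        = ‖prox u - u‖ ^ 2 + 2 * ⟪prox u - u, u - v⟫ + ‖u - v‖ ^ 2 := by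
      rw [show prox u - v = (prox u - u) + (u - v) from by abel, norm_add_sq_real]
    rw [hexp] at h1
    have hiq : ⟪u - prox u, v - u⟫ = ⟪prox u - u, u - v⟫ := by
      rw [show u - prox u = -(prox u - u) from by abel,
        show v - u = -(u - v) from by abel, inner_neg_neg]
    have hnr : ‖u - v‖ = ‖v - u‖ := norm_sub_rev u v
    rw [hnr] at h1
    have heq : F (prox u) + (‖prox u - u‖ ^ 2 + 2 * ⟪prox u - u, u - v⟫ + ‖v - u‖ ^ 2)
          / (2 * μ)
        = F (prox u) + ‖prox u - u‖ ^ 2 / (2 * μ) + ⟪prox u - u, u - v⟫ / μ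
          + ‖v - u‖ ^ 2 / (2 * μ) := by
      field_simp; ring
    rw [henv u, hiq]
    linarith [h1, heq]
  -- gradient part
  have hgrad : ∀ u, HasGradientAt M (μ⁻¹ • (u - prox u)) u := by
    intro u
    rw [hasGradientAt_iff_isLittleO, Asymptotics.isLittleO_iff]
    intro c hc
    have hr : (0:ℝ) < 2 * c * μ / 3 := by positivity
    filter_upwards [Metric.ball_mem_nhds u hr] with v hv
    have hvu : ‖v - u‖ < 2 * c * μ / 3 := by
      rwa [Metric.mem_ball, dist_eq_norm] at hv
    have hvu0 : (0:ℝ) ≤ ‖v - u‖ := norm_nonneg _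
    have hsm : ⟪μ⁻¹ • (u - prox u), v - u⟫ = ⟪u - prox u, v - u⟫ / μ := by
      rw [real_inner_smul_left]; ring
    -- upper bound
    have hup : M v - M u - ⟪u - prox u, v - u⟫ / μ ≤ ‖v - u‖ ^ 2 / (2 * μ) := by
      have := hdesc u v
      linarith
    -- lower bound
    have hlo : -(3 / (2 * μ) * ‖v - u‖ ^ 2) ≤ M v - M u - ⟪u - prox u, v - u⟫ / μ := by
      have hd := hdesc v u
      rw [show ‖u - v‖ = ‖v - u‖ from norm_sub_rev u v] at hd
      have hI : ⟪u - prox u, v - u⟫ + ⟪v - prox v, u - v⟫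
          = ⟪(u - v) - (prox u - prox v), v - u⟫ := by
        simp only [inner_sub_left, inner_sub_right]
        ring
      have hIb : ⟪u - prox u, v - u⟫ + ⟪v - prox v, u - v⟫ ≤ ‖v - u‖ ^ 2 := by
        rw [hI]
        have h1 := real_inner_le_norm ((u - v) - (prox u - prox v)) (v - u)
        have h2 : ‖(u - v) - (prox u - prox v)‖ * ‖v - u‖ ≤ ‖v - u‖ * ‖v - u‖ := by
          have := hne u v
          rw [show ‖u - v‖ = ‖v - u‖ from norm_sub_rev u v] at this
          exact mul_le_mul_of_nonneg_right this hvu0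
        nlinarith
      have e1 : (⟪u - prox u, v - u⟫ + ⟪v - prox v, u - v⟫) / μ
          = ⟪u - prox u, v - u⟫ / μ + ⟪v - prox v, u - v⟫ / μ := add_div _ _ _
      have e2 : 3 / (2 * μ) * ‖v - u‖ ^ 2
          = ‖v - u‖ ^ 2 / μ + ‖v - u‖ ^ 2 / (2 * μ) := by
        field_simp; ring
      have e4 : (⟪u - prox u, v - u⟫ + ⟪v - prox v, u - v⟫) / μ ≤ ‖v - u‖ ^ 2 / μ :=
        by gcongr
      linarith
    have hq : ‖v - u‖ * ‖v - u‖ ≤ ‖v - u‖ * (2 * c * μ / 3) :=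
      mul_le_mul_of_nonneg_left hvu.le hvu0
    have hcx : (0:ℝ) ≤ ‖v - u‖ * c * μ := by positivity
    have hb1 : ‖v - u‖ ^ 2 / (2 * μ) ≤ c * ‖v - u‖ := by
      rw [div_le_iff₀ h2μ]
      linarith [hq, hcx]
    have hb2 : 3 / (2 * μ) * ‖v - u‖ ^ 2 ≤ c * ‖v - u‖ := by
      rw [div_mul_eq_mul_div, div_le_iff₀ h2μ]
      linarith [hq, hcx]
    rw [hsm, Real.norm_eq_abs, abs_le]
    constructor <;> linarith
  refine ⟨⟨convex_univ, ?_⟩, hgrad, hlip⟩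
  intro u _ v _ a b ha hb hab
  set x : ℝ := ‖prox u - u‖ with hx
  set y : ℝ := ‖prox v - v‖ with hy
  have h1 : M (a • u + b • v) ≤ F (a • prox u + b • prox v)
      + ‖a • prox u + b • prox v - (a • u + b • v)‖ ^ 2 / (2 * μ) := hMle _ _
  have h2 : F (a • prox u + b • prox v) ≤ a * F (prox u) + b * F (prox v) :=
    hF.2 (Set.mem_univ _) (Set.mem_univ _) ha hb hab
  have h3 : ‖a • prox u + b • prox v - (a • u + b • v)‖ ≤ a * x + b * y := by
    rw [show a • prox u + b • prox v - (a • u + b • v)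
        = a • (prox u - u) + b • (prox v - v) from by module]
    refine (norm_add_le _ _).trans ?_
    rw [norm_smul, norm_smul, Real.norm_eq_abs, Real.norm_eq_abs,
      abs_of_nonneg ha, abs_of_nonneg hb]
  have h4 : ‖a • prox u + b • prox v - (a • u + b • v)‖ ^ 2 ≤ a * x ^ 2 + b * y ^ 2 := by
    have h5 : ‖a • prox u + b • prox v - (a • u + b • v)‖ ^ 2 ≤ (a * x + b * y) ^ 2 :=
      pow_le_pow_left₀ (norm_nonneg _) h3 2
    nlinarith [mul_nonneg (mul_nonneg ha hb) (sq_nonneg (x - y))]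
  have h6 : ‖a • prox u + b • prox v - (a • u + b • v)‖ ^ 2 / (2 * μ)
      ≤ (a * x ^ 2 + b * y ^ 2) / (2 * μ) := by gcongr
  have e : (a * x ^ 2 + b * y ^ 2) / (2 * μ)
      = a * (x ^ 2 / (2 * μ)) + b * (y ^ 2 / (2 * μ)) := by ring
  have hgoal : M (a • u + b • v) ≤ a * M u + b * M v := by
    rw [henv u, henv v]
    linarith
  simpa [smul_eq_mul] using hgoal
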